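/- Let u : ℝⁿ → ℝ be η-strongly convex, let 0 < η̃ < η, and let f ∈ C²(ℝⁿ) satisfy n · max_{|α|=2} ‖D^α f‖_∞ ≤ η − η̃, where the maximum is over multi-indices α of order 2 and ‖·‖_∞ is the supremum norm over ℝⁿ. Then u + f is η̃-strongly convex. -/

import Mathlib

open MeasureTheory Metric Set Filter
open scoped ENNReal

/-- `u : ℝⁿ → ℝ` is `η`-strongly convex: `x ↦ u x - (η/2)‖x‖²` is convex. -/
def StronglyConvexWith {n : ℕ} (η : ℝ) (u : EuclideanSpace ℝ (Fin n) → ℝ) : Prop :=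
  ConvexOn ℝ Set.univ (fun x => u x - η / 2 * ‖x‖ ^ 2)

open scoped RealInnerProductSpace

lemma euclid_sum {n : ℕ} (w : EuclideanSpace ℝ (Fin n)) :
    w = ∑ i, w i • EuclideanSpace.single i 1 := by
  have h := (EuclideanSpace.basisFun (Fin n) ℝ).sum_repr w
  simpa [EuclideanSpace.basisFun_apply, EuclideanSpace.basisFun_repr] using h.symm

lemma bilin_expand {n : ℕ} (L : EuclideanSpace ℝ (Fin n) →L[ℝ] EuclideanSpace ℝ (Fin n) →L[ℝ] ℝ)
    (v w : EuclideanSpace ℝ (Fin n)) :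
    L v w = ∑ i, ∑ j, v i * w j * L (EuclideanSpace.single i 1) (EuclideanSpace.single j 1) := by
  have h1 : L v = ∑ i, v i • L (EuclideanSpace.single i 1) := by
    conv_lhs => rw [euclid_sum v]
    rw [map_sum]
    exact Finset.sum_congr rfl fun i _ => map_smul L _ _
  rw [h1, ContinuousLinearMap.sum_apply]
  refine Finset.sum_congr rfl fun i _ => ?_
  rw [ContinuousLinearMap.smul_apply]
  have h2 : (L (EuclideanSpace.single i 1)) w
      = ∑ j, w j * (L (EuclideanSpace.single i 1)) (EuclideanSpace.single j 1) := by
    conv_lhs => rw [euclid_sum w]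
    rw [map_sum]
    exact Finset.sum_congr rfl fun j _ => map_smul _ _ _
  rw [h2, smul_eq_mul, Finset.mul_sum]
  exact Finset.sum_congr rfl fun j _ => by ring

lemma bilin_bound {n : ℕ} (L : EuclideanSpace ℝ (Fin n) →L[ℝ] EuclideanSpace ℝ (Fin n) →L[ℝ] ℝ)
    (c : ℝ) (hc : 0 ≤ c)
    (hb : ∀ i j : Fin n,
      (n : ℝ) * |L (EuclideanSpace.single i 1) (EuclideanSpace.single j 1)| ≤ c)
    (v : EuclideanSpace ℝ (Fin n)) : |L v v| ≤ c * ‖v‖ ^ 2 := by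
  rcases Nat.eq_zero_or_pos n with hn | hn
  · subst hn
    rw [bilin_expand]
    simp [hc]
    positivity
  have hnpos : (0:ℝ) < n := by exact_mod_cast hn
  have hLij : ∀ i j : Fin n,
      |L (EuclideanSpace.single i 1) (EuclideanSpace.single j 1)| ≤ c / n := by
    intro i j
    rw [le_div_iff₀ hnpos]
    linarith [hb i j]
  have hnorm : ‖v‖ ^ 2 = ∑ i, (v i) ^ 2 := by
    rw [EuclideanSpace.norm_eq, Real.sq_sqrt (by positivity)]
    exact Finset.sum_congr rfl fun i _ => by rw [Real.norm_eq_abs, sq_abs]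
  rw [bilin_expand]
  calc |∑ i, ∑ j, v i * v j * L (EuclideanSpace.single i 1) (EuclideanSpace.single j 1)|
      ≤ ∑ i, ∑ j, |v i * v j * L (EuclideanSpace.single i 1) (EuclideanSpace.single j 1)| := by
        refine (Finset.abs_sum_le_sum_abs _ _).trans ?_
        exact Finset.sum_le_sum fun i _ => Finset.abs_sum_le_sum_abs _ _
    _ ≤ ∑ i, ∑ j, |v i| * |v j| * (c / n) := by
        refine Finset.sum_le_sum fun i _ => Finset.sum_le_sum fun j _ => ?_
        rw [abs_mul, abs_mul]
        exact mul_le_mul_of_nonneg_left (hLij i j) (by positivity)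
    _ = (∑ i, |v i|) ^ 2 * (c / n) := by
        rw [sq, Finset.sum_mul_sum, Finset.sum_mul]
        exact Finset.sum_congr rfl fun i _ => by rw [Finset.sum_mul]
    _ ≤ ((n : ℝ) * ∑ i, |v i| ^ 2) * (c / n) := by
        refine mul_le_mul_of_nonneg_right ?_ (by positivity)
        have := sq_sum_le_card_mul_sum_sq (s := Finset.univ) (f := fun i : Fin n => |v i|)
        simpa using this
    _ = c * ‖v‖ ^ 2 := by
        rw [hnorm]
        have : ∑ i, |v i| ^ 2 = ∑ i, (v i) ^ 2 :=
          Finset.sum_congr rfl fun i _ => sq_abs _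
        rw [this]
        field_simp

lemma convex_perturb {n : ℕ} (f : EuclideanSpace ℝ (Fin n) → ℝ) (hf : ContDiff ℝ 2 f)
    (c : ℝ)
    (hB : ∀ x v : EuclideanSpace ℝ (Fin n), |fderiv ℝ (fderiv ℝ f) x v v| ≤ c * ‖v‖ ^ 2) :
    ConvexOn ℝ Set.univ (fun z => f z + c / 2 * ‖z‖ ^ 2) := by
  have hf1 : Differentiable ℝ f := hf.differentiable (by norm_num)
  have hf2 : Differentiable ℝ (fderiv ℝ f) :=
    (hf.fderiv_right (m := 1) le_rfl).differentiable (by norm_num)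
  set B := fderiv ℝ (fderiv ℝ f) with hBdef
  refine ⟨convex_univ, fun x _ y _ a b ha hb hab => ?_⟩
  set v : EuclideanSpace ℝ (Fin n) := y - x with hvdef
  set p : ℝ → EuclideanSpace ℝ (Fin n) := fun t => x + t • v with hpdef
  have hp : ∀ t : ℝ, HasDerivAt p v t := by
    intro t
    have := ((hasDerivAt_id t).smul_const v).const_add x
    rw [one_smul] at this
    exact this
  have hnorm : ∀ t : ℝ, ‖p t‖ ^ 2 = ‖x‖ ^ 2 + 2 * t * ⟪x, v⟫ + t ^ 2 * ‖v‖ ^ 2 := by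
    intro t
    rw [hpdef]
    simp only
    rw [norm_add_sq_real, real_inner_smul_right, norm_smul]
    rw [Real.norm_eq_abs, mul_pow, sq_abs]
    ring
  set φ : ℝ → ℝ := fun t => f (p t) + c / 2 * (‖x‖ ^ 2 + 2 * t * ⟪x, v⟫ + t ^ 2 * ‖v‖ ^ 2)
    with hφdef
  set φ' : ℝ → ℝ := fun t => fderiv ℝ f (p t) v + c / 2 * (2 * ⟪x, v⟫ + 2 * t * ‖v‖ ^ 2)
    with hφ'def
  have hd1 : ∀ t : ℝ, HasDerivAt φ (φ' t) t := by
    intro t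
    have h1 : HasDerivAt (fun t => f (p t)) (fderiv ℝ f (p t) v) t :=
      (hf1 (p t)).hasFDerivAt.comp_hasDerivAt t (hp t)
    have h2 : HasDerivAt (fun t : ℝ => c / 2 * (‖x‖ ^ 2 + 2 * t * ⟪x, v⟫ + t ^ 2 * ‖v‖ ^ 2))
        (c / 2 * (2 * ⟪x, v⟫ + 2 * t * ‖v‖ ^ 2)) t := by
      have h3 : HasDerivAt (fun t : ℝ => ‖x‖ ^ 2 + 2 * t * ⟪x, v⟫ + t ^ 2 * ‖v‖ ^ 2)
          (2 * ⟪x, v⟫ + 2 * t * ‖v‖ ^ 2) t := by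
        have ha1 : HasDerivAt (fun t : ℝ => 2 * t * ⟪x, v⟫) (2 * ⟪x, v⟫) t := by
          simpa using ((hasDerivAt_id t).const_mul 2).mul_const ⟪x, v⟫
        have ha2 : HasDerivAt (fun t : ℝ => t ^ 2 * ‖v‖ ^ 2) (2 * t * ‖v‖ ^ 2) t := by
          simpa using (hasDerivAt_pow 2 t).mul_const (‖v‖ ^ 2)
        exact (ha1.const_add (‖x‖ ^ 2)).add ha2
      exact h3.const_mul (c / 2)
    exact h1.add h2
  have hd2 : ∀ t : ℝ, HasDerivAt φ' (B (p t) v v + c * ‖v‖ ^ 2) t := by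
    intro t
    have h1 : HasDerivAt (fun t => fderiv ℝ f (p t) v) (B (p t) v v) t := by
      have he : HasFDerivAt (fun z => fderiv ℝ f z v)
          ((ContinuousLinearMap.apply ℝ ℝ v).comp (B (p t))) (p t) :=
        (ContinuousLinearMap.apply ℝ ℝ v).hasFDerivAt.comp (p t) (hf2 (p t)).hasFDerivAt
      have := he.comp_hasDerivAt t (hp t)
      exact this
    have h2 : HasDerivAt (fun t : ℝ => c / 2 * (2 * ⟪x, v⟫ + 2 * t * ‖v‖ ^ 2))
        (c * ‖v‖ ^ 2) t := by
      have ha2 : HasDerivAt (fun t : ℝ => 2 * t * ‖v‖ ^ 2) (2 * ‖v‖ ^ 2) t := by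
        simpa using ((hasDerivAt_id t).const_mul 2).mul_const (‖v‖ ^ 2)
      have := (ha2.const_add (2 * ⟪x, v⟫)).const_mul (c / 2)
      rw [show c * ‖v‖ ^ 2 = c / 2 * (2 * ‖v‖ ^ 2) by ring]
      exact this
    exact h1.add h2
  have hφconv : ConvexOn ℝ Set.univ φ := by
    refine convexOn_of_hasDerivWithinAt2_nonneg convex_univ
      (fun t _ => (hd1 t).continuousAt.continuousWithinAt)
      (fun t ht => (hd1 t).hasDerivWithinAt)
      (fun t ht => (hd2 t).hasDerivWithinAt) (fun t _ => ?_)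
    have := hB (p t) v
    have h := neg_abs_le (B (p t) v v)
    nlinarith [hB (p t) v]
  have hp0 : p 0 = x := by simp [hpdef]
  have hp1 : p 1 = y := by simp [hpdef, hvdef]
  have hpb : p b = a • x + b • y := by
    rw [hpdef]
    simp only
    have : a = 1 - b := by linarith
    rw [this, hvdef, sub_smul, one_smul, smul_sub]
    abel
  have hkey := hφconv.2 (mem_univ (0:ℝ)) (mem_univ (1:ℝ)) ha hb hab
  simp only [smul_eq_mul, mul_zero, mul_one, zero_add] at hkey
  have e0 : φ 0 = f x + c / 2 * ‖x‖ ^ 2 := by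
    rw [hφdef]; simp only [hp0, ← hnorm 0, hp0]
  have e1 : φ 1 = f y + c / 2 * ‖y‖ ^ 2 := by
    rw [hφdef]; simp only [← hnorm 1, hp1]
  have eb : φ b = f (a • x + b • y) + c / 2 * ‖a • x + b • y‖ ^ 2 := by
    rw [hφdef]; simp only [← hnorm b, hpb]
  rw [e0, e1, eb] at hkey
  exact hkey

/-- Adding a `C²` perturbation `f` whose second-order partial derivatives satisfy
`n · max_{|α| = 2} ‖D^α f‖_∞ ≤ η - η̃` to an `η`-strongly convex function yields an
`η̃`-strongly convex function. -/
theorem strongly_convex_add_small_C2 {n : ℕ}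
    (u : EuclideanSpace ℝ (Fin n) → ℝ) (η : ℝ) (hη : 0 < η)
    (hu : StronglyConvexWith η u)
    (η' : ℝ) (hη' : 0 < η') (hη'η : η' < η)
    (f : EuclideanSpace ℝ (Fin n) → ℝ) (hf : ContDiff ℝ 2 f)
    (hbound : ∀ i j : Fin n, ∀ x,
      (n : ℝ) * |iteratedFDeriv ℝ 2 f x
        ![EuclideanSpace.single i 1, EuclideanSpace.single j 1]| ≤ η - η') :
    StronglyConvexWith η' (fun x => u x + f x) := by
  have hc : (0:ℝ) ≤ η - η' := le_of_lt (sub_pos.mpr hη'η)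
  have hB : ∀ x v : EuclideanSpace ℝ (Fin n),
      |fderiv ℝ (fderiv ℝ f) x v v| ≤ (η - η') * ‖v‖ ^ 2 := by
    intro x v
    refine bilin_bound _ _ hc (fun i j => ?_) v
    have h := hbound i j x
    rwa [iteratedFDeriv_two_apply, Matrix.cons_val_zero, Matrix.cons_val_one,
      Matrix.cons_val_zero] at h
  have key := convex_perturb f hf (η - η') hB
  show ConvexOn ℝ Set.univ (fun x => (u x + f x) - η' / 2 * ‖x‖ ^ 2)
  have hu' : ConvexOn ℝ Set.univ (fun x => u x - η / 2 * ‖x‖ ^ 2) := hu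
  have heq : (fun x => (u x + f x) - η' / 2 * ‖x‖ ^ 2)
      = (fun x : EuclideanSpace ℝ (Fin n) => u x - η / 2 * ‖x‖ ^ 2)
        + (fun z => f z + (η - η') / 2 * ‖z‖ ^ 2) := by
    funext z
    simp only [Pi.add_apply]
    ring
  rw [heq]
  exact hu'.add key
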